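/- For a C-pseudo-cone K, the negated support function satisfies −h_K(u) = inf_{v ∈ Ω_C} |⟨u,v⟩| ρ_K(v) for u ∈ Ω_{C°}. -/

import Mathlib

open Set Metric Pointwise

noncomputable section

abbrev E (n : ℕ) := EuclideanSpace ℝ (Fin n)

/-- A closed convex pointed cone with nonempty interior. -/
def IsGoodCone {n : ℕ} (C : Set (E n)) : Prop :=
  IsClosed C ∧ Convex ℝ C ∧ (∀ x ∈ C, ∀ r : ℝ, 0 ≤ r → r • x ∈ C) ∧
    (∀ x ∈ C, -x ∈ C → x = 0) ∧ (interior C).Nonempty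

/-- A `C`-pseudo-cone. -/
def IsPseudoCone {n : ℕ} (C K : Set (E n)) : Prop :=
  K.Nonempty ∧ IsClosed K ∧ Convex ℝ K ∧ K ⊆ C ∧ (0 : E n) ∉ K ∧ K + C = K

/-- The dual cone of `C`. -/
def dualCone {n : ℕ} (C : Set (E n)) : Set (E n) := {x | ∀ y ∈ C, (inner ℝ x y : ℝ) ≤ 0}

/-- Ω_C = S^{n-1} ∩ int C. -/
def Omega {n : ℕ} (C : Set (E n)) : Set (E n) := {v | ‖v‖ = 1} ∩ interior C

/-- Radial function. -/
def radial {n : ℕ} (K : Set (E n)) (v : E n) : ℝ := sInf {r : ℝ | 0 < r ∧ r • v ∈ K}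

/-- Support function. -/
def suppFn {n : ℕ} (K : Set (E n)) (u : E n) : ℝ := sSup ((fun y => (inner ℝ u y : ℝ)) '' K)

/-- Copolar set. -/
def copolar {n : ℕ} (K : Set (E n)) : Set (E n) := {x | ∀ y ∈ K, (inner ℝ x y : ℝ) ≤ -1}

/-- Convexification of `f`. -/
def convexif {n : ℕ} (C : Set (E n)) (f : E n → ℝ) : Set (E n) :=
  ⋂₀ {K | IsPseudoCone C K ∧ ∀ v ∈ Omega C, f v • v ∈ K}

/-- Pseudo-conjugate of a function on a domain `D` of directions. -/
def pconj {n : ℕ} (D : Set (E n)) (f : E n → ℝ) (u : E n) : ℝ :=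
  sSup ((fun v => 1 / (|(inner ℝ u v : ℝ)| * f v)) '' D)

/-- `u` is an outer normal vector of `K` at `x`. -/
def IsNormalAt {n : ℕ} (K : Set (E n)) (u x : E n) : Prop :=
  x ∈ K ∧ ∀ y ∈ K, (inner ℝ u (y - x) : ℝ) ≤ 0

lemma cone_add_mem {n : ℕ} {C : Set (E n)} (hC : IsGoodCone C) {x y : E n}
    (hx : x ∈ C) (hy : y ∈ C) : x + y ∈ C := by
  have h := hC.2.1 hx hy (by norm_num : (0:ℝ) ≤ 1/2) (by norm_num : (0:ℝ) ≤ 1/2) (by norm_num)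
  have h2 := hC.2.2.1 _ h 2 (by norm_num)
  have he : (2:ℝ) • ((1/2:ℝ) • x + (1/2:ℝ) • y) = x + y := by
    rw [smul_add, smul_smul, smul_smul]; norm_num
  rwa [he] at h2

lemma smul_interior_mem {n : ℕ} {C : Set (E n)} (hC : IsGoodCone C) {x : E n} {t : ℝ}
    (ht : 0 < t) (hx : x ∈ interior C) : t • x ∈ interior C := by
  have hsub : t • C ⊆ C := by
    rintro _ ⟨w, hw, rfl⟩; exact hC.2.2.1 w hw t ht.le
  have : t • interior C ⊆ interior C := by
    rw [← interior_smul₀ (ne_of_gt ht)]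
    exact interior_mono hsub
  exact this ⟨x, hx, rfl⟩

lemma add_interior_mem {n : ℕ} {C : Set (E n)} (hC : IsGoodCone C) {x w : E n}
    (hx : x ∈ C) (hw : w ∈ interior C) : x + w ∈ interior C := by
  rw [mem_interior] at hw ⊢
  obtain ⟨U, hUC, hUopen, hwU⟩ := hw
  refine ⟨(x + ·) '' U, ?_, (isOpenMap_add_left x) U hUopen, ⟨w, hwU, rfl⟩⟩
  rintro _ ⟨z, hz, rfl⟩
  exact cone_add_mem hC hx (hUC hz)

lemma inner_neg_of_mem {n : ℕ} {C : Set (E n)} {u x : E n}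
    (hu : u ∈ interior (dualCone C)) (hx : x ∈ C) (hx0 : x ≠ 0) :
    (inner ℝ u x : ℝ) < 0 := by
  have hle : (inner ℝ u x : ℝ) ≤ 0 := interior_subset hu x hx
  rcases lt_or_eq_of_le hle with h | h
  · exact h
  exfalso
  obtain ⟨ε, hε, hball⟩ := Metric.isOpen_iff.1 isOpen_interior u hu
  have hxn : (0:ℝ) < ‖x‖ := norm_pos_iff.2 hx0
  set t : ℝ := ε / (2 * ‖x‖) with ht_def
  have ht : 0 < t := by positivity
  have hmem : u + t • x ∈ dualCone C := by
    apply interior_subset (hball ?_)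
    rw [mem_ball_iff_norm]
    have : u + t • x - u = t • x := by abel
    rw [this, norm_smul, Real.norm_eq_abs, abs_of_pos ht]
    have he : t * ‖x‖ = ε / 2 := by rw [ht_def]; field_simp
    rw [he]; linarith
  have h2 := hmem x hx
  rw [inner_add_left, real_inner_smul_left, real_inner_self_eq_norm_sq] at h2
  have hp := mul_pos ht (pow_pos hxn 2)
  nlinarith

lemma zero_not_interior {n : ℕ} {C : Set (E n)} (hC : IsGoodCone C) {y : E n}
    (hy : y ∈ C) (hy0 : y ≠ 0) : (0 : E n) ∉ interior C := by
  intro h0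
  obtain ⟨ε, hε, hball⟩ := Metric.isOpen_iff.1 isOpen_interior 0 h0
  have hyn : (0:ℝ) < ‖y‖ := norm_pos_iff.2 hy0
  set t : ℝ := ε / (2 * ‖y‖) with ht_def
  have ht : 0 < t := by positivity
  have hnorm : ‖t • y‖ = ε / 2 := by
    rw [norm_smul, Real.norm_eq_abs, abs_of_pos ht, ht_def]
    field_simp
  have h1 : t • y ∈ C := by
    apply interior_subset (hball ?_)
    rw [mem_ball_iff_norm, sub_zero, hnorm]; linarith
  have h2 : -(t • y) ∈ C := by
    apply interior_subset (hball ?_)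
    rw [mem_ball_iff_norm, sub_zero, norm_neg, hnorm]; linarith
  have := hC.2.2.2.1 _ h1 h2
  rw [smul_eq_zero] at this
  rcases this with h | h
  · exact (ne_of_gt ht) h
  · exact hy0 h

lemma radial_spec {n : ℕ} {C K : Set (E n)} (hC : IsGoodCone C) (hK : IsPseudoCone C K)
    {v : E n} (hv : v ∈ Omega C) :
    0 < radial K v ∧ (radial K v) • v ∈ K ∧ ∀ r : ℝ, 0 < r → r • v ∈ K → radial K v ≤ r := by
  obtain ⟨y0, hy0⟩ := hK.1
  obtain ⟨hv1, hv2⟩ := hv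
  have hv1 : ‖v‖ = 1 := hv1
  -- δ : ball around 0 avoiding K
  obtain ⟨δ, hδ, hballδ⟩ := Metric.isOpen_iff.1 hK.2.1.isOpen_compl 0 hK.2.2.2.2.1
  -- the defining set
  set S := {r : ℝ | 0 < r ∧ r • v ∈ K} with hS_def
  have hSsub : ∀ r ∈ S, δ ≤ r := by
    rintro r ⟨hr, hrv⟩
    by_contra hlt
    push_neg at hlt
    have : r • v ∈ ball (0 : E n) δ := by
      rw [mem_ball_iff_norm, sub_zero, norm_smul, Real.norm_eq_abs, abs_of_pos hr, hv1, mul_one]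
      exact hlt
    exact hballδ this hrv
  have hSeq : S = {r : ℝ | r • v ∈ K} ∩ Ici δ := by
    ext r
    constructor
    · rintro ⟨hr, hrv⟩; exact ⟨hrv, hSsub r ⟨hr, hrv⟩⟩
    · rintro ⟨hrv, hr⟩; exact ⟨lt_of_lt_of_le hδ hr, hrv⟩
  have hSclosed : IsClosed S := by
    rw [hSeq]
    exact (hK.2.1.preimage (continuous_id.smul continuous_const)).inter isClosed_Ici
  have hSne : S.Nonempty := by
    -- find large R with R • v ∈ K
    obtain ⟨ε, hε, hballv⟩ := Metric.isOpen_iff.1 isOpen_interior v hv2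
    set R : ℝ := ‖y0‖ / ε + 1 with hR_def
    have hR : 0 < R := by positivity
    have hmem : v - R⁻¹ • y0 ∈ C := by
      apply interior_subset (hballv ?_)
      rw [mem_ball_iff_norm]
      have : v - R⁻¹ • y0 - v = -(R⁻¹ • y0) := by abel
      rw [this, norm_neg, norm_smul, Real.norm_eq_abs, abs_of_pos (by positivity)]
      rw [inv_mul_eq_div, div_lt_iff₀ hR]
      have : ε * R = ‖y0‖ + ε := by rw [hR_def]; field_simp
      nlinarith [norm_nonneg y0]
    have hmem2 : R • v - y0 ∈ C := by
      have := hC.2.2.1 _ hmem R hR.le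
      rwa [smul_sub, smul_smul, mul_inv_cancel₀ (ne_of_gt hR), one_smul] at this
    have : R • v ∈ K := by
      have hadd : y0 + (R • v - y0) ∈ K + C := Set.add_mem_add hy0 hmem2
      rw [hK.2.2.2.2.2] at hadd
      convert hadd using 1; abel
    exact ⟨R, hR, this⟩
  have hbdd : BddBelow S := ⟨δ, hSsub⟩
  have hmem : radial K v ∈ S := hSclosed.csInf_mem hSne hbdd
  exact ⟨hmem.1, hmem.2, fun r hr hrv => csInf_le hbdd ⟨hr, hrv⟩⟩

theorem stmt4 {n : ℕ} (C K : Set (E n)) (hC : IsGoodCone C) (hK : IsPseudoCone C K)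
    (u : E n) (hu : u ∈ Omega (dualCone C)) :
    -suppFn K u = sInf ((fun v => |(inner ℝ u v : ℝ)| * radial K v) '' Omega C) := by
  obtain ⟨hu1, hu2⟩ := hu
  obtain ⟨y0, hy0⟩ := hK.1
  have hy0ne : y0 ≠ 0 := fun h => hK.2.2.2.2.1 (h ▸ hy0)
  have hy0C : y0 ∈ C := hK.2.2.2.1 hy0
  obtain ⟨c, hc⟩ := hC.2.2.2.2
  have hcC : c ∈ C := interior_subset hc
  have h0ni : (0 : E n) ∉ interior C := zero_not_interior hC hy0C hy0ne
  have hcne : c ≠ 0 := fun h => h0ni (h ▸ hc)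
  set Iu := (fun y => (inner ℝ u y : ℝ)) '' K with hIu_def
  have hIne : Iu.Nonempty := ⟨_, ⟨y0, hy0, rfl⟩⟩
  have hIbdd : BddAbove Iu := by
    refine ⟨0, ?_⟩
    rintro _ ⟨y, hyK, rfl⟩
    exact interior_subset hu2 y (hK.2.2.2.1 hyK)
  set A := (fun v => |(inner ℝ u v : ℝ)| * radial K v) '' Omega C with hA_def
  have hcn : (0:ℝ) < ‖c‖ := norm_pos_iff.2 hcne
  have hv0 : ‖c‖⁻¹ • c ∈ Omega C := by
    constructor
    · show ‖‖c‖⁻¹ • c‖ = 1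
      rw [norm_smul, Real.norm_eq_abs, abs_of_pos (by positivity), inv_mul_cancel₀ (ne_of_gt hcn)]
    · exact smul_interior_mem hC (by positivity) hc
  have hAne : A.Nonempty := ⟨_, ⟨_, hv0, rfl⟩⟩
  have hlow : ∀ a ∈ A, -suppFn K u ≤ a := by
    rintro _ ⟨v, hv, rfl⟩
    obtain ⟨hρpos, hρmem, _⟩ := radial_spec hC hK hv
    have hvC : v ∈ C := interior_subset hv.2
    have hn : ‖v‖ = 1 := hv.1
    have hvne : v ≠ 0 := by
      intro h; rw [h, norm_zero] at hn; exact one_ne_zero hn.symm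
    have hneg : (inner ℝ u v : ℝ) < 0 := inner_neg_of_mem hu2 hvC hvne
    have hle : (inner ℝ u (radial K v • v) : ℝ) ≤ suppFn K u :=
      le_csSup hIbdd ⟨_, hρmem, rfl⟩
    rw [real_inner_smul_right] at hle
    show -suppFn K u ≤ |(inner ℝ u v : ℝ)| * radial K v
    rw [abs_of_neg hneg]
    nlinarith
  have h1 : -suppFn K u ≤ sInf A := le_csInf hAne hlow
  have hAbdd : BddBelow A := ⟨_, hlow⟩
  have h2 : sInf A ≤ -suppFn K u := by
    apply le_of_forall_pos_le_add
    intro ε hε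
    obtain ⟨z, ⟨y, hyK, rfl⟩, hz⟩ := exists_lt_of_lt_csSup hIne
      (show suppFn K u - ε/2 < suppFn K u by linarith)
    have hac : (inner ℝ u c : ℝ) < 0 := inner_neg_of_mem hu2 hcC hcne
    set δ : ℝ := ε / (2 * (-(inner ℝ u c : ℝ))) with hδ_def
    have hδ : 0 < δ := div_pos hε (by linarith)
    set y' := y + δ • c with hy'_def
    have hy'int : y' ∈ interior C :=
      add_interior_mem hC (hK.2.2.2.1 hyK) (smul_interior_mem hC hδ hc)
    have hy'K : y' ∈ K := by
      have hadd : y + δ • c ∈ K + C := Set.add_mem_add hyK (hC.2.2.1 c hcC δ hδ.le)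
      rwa [hK.2.2.2.2.2] at hadd
    have hy'ne : y' ≠ 0 := fun h => h0ni (h ▸ hy'int)
    have hy'n : (0:ℝ) < ‖y'‖ := norm_pos_iff.2 hy'ne
    set v := ‖y'‖⁻¹ • y' with hv_def
    have hvΩ : v ∈ Omega C := by
      constructor
      · show ‖v‖ = 1
        rw [hv_def, norm_smul, Real.norm_eq_abs, abs_of_pos (by positivity),
          inv_mul_cancel₀ (ne_of_gt hy'n)]
      · exact smul_interior_mem hC (by positivity) hy'int
    obtain ⟨hρpos, hρmem, hρmin⟩ := radial_spec hC hK hvΩ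
    have hsm : ‖y'‖ • v = y' := smul_inv_smul₀ (ne_of_gt hy'n) y'
    have hρle : radial K v ≤ ‖y'‖ := hρmin ‖y'‖ hy'n (by rw [hsm]; exact hy'K)
    have hvC : v ∈ C := interior_subset hvΩ.2
    have hn : ‖v‖ = 1 := hvΩ.1
    have hvne : v ≠ 0 := by
      intro h; rw [h, norm_zero] at hn; exact one_ne_zero hn.symm
    have hneg : (inner ℝ u v : ℝ) < 0 := inner_neg_of_mem hu2 hvC hvne
    have hmemA : |(inner ℝ u v : ℝ)| * radial K v ∈ A := ⟨v, hvΩ, rfl⟩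
    have hchain : |(inner ℝ u v : ℝ)| * radial K v ≤ -(inner ℝ u y' : ℝ) := by
      have ha : |(inner ℝ u v : ℝ)| * radial K v ≤ |(inner ℝ u v : ℝ)| * ‖y'‖ :=
        mul_le_mul_of_nonneg_left hρle (abs_nonneg _)
      have hb : (inner ℝ u y' : ℝ) = ‖y'‖ * (inner ℝ u v : ℝ) := by
        conv_lhs => rw [← hsm]
        rw [real_inner_smul_right]
      rw [abs_of_neg hneg] at ha ⊢
      rw [hb]; nlinarith
    have hy'val : (inner ℝ u y' : ℝ) = inner ℝ u y + δ * inner ℝ u c := by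
      rw [hy'_def, inner_add_right, real_inner_smul_right]
    have hδval : δ * (-(inner ℝ u c : ℝ)) = ε / 2 := by
      have hne : -(inner ℝ u c : ℝ) ≠ 0 := ne_of_gt (by linarith)
      rw [hδ_def, ← div_div]
      exact div_mul_cancel₀ _ hne
    have hfin : sInf A ≤ |(inner ℝ u v : ℝ)| * radial K v := csInf_le hAbdd hmemA
    nlinarith
  linarith
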